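/- Let μ and ν be probability measures on measurable spaces α and β, let ρ = μ ⊗ ν be the product probability measure on α × β, and let E ⊆ α × β be a measurable set with ρ(E) > 0. For a ∈ α write E_a = {b ∈ β : (a,b) ∈ E}. Then for every nonnegative measurable function f : α × β → [0,∞], the integral of f with respect to the conditioned measure ρ[·|E] equals ∫_α ( ∫_β f(a,b) d(ν[·|E_a])(b) ) dπ(a), where π is the pushforward of ρ[·|E] under the first-coordinate projection (i.e., sampling the first coordinate from its conditional law and then the second coordinate from its conditional law given the first reproduces the full conditional law). -/

import Mathlib

open MeasureTheory ProbabilityTheory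
open scoped ENNReal

/-- PDC lemma for an event of positive probability: sampling the first
coordinate from its conditional law, then the second from its conditional law
given the first, reproduces the full conditional law `ρ[|E]`. -/
theorem pdc_positive_probability {α β : Type*} [MeasurableSpace α] [MeasurableSpace β]
    (μ : Measure α) (ν : Measure β) [IsProbabilityMeasure μ] [IsProbabilityMeasure ν]
    (ρ : Measure (α × β)) (hρ : ρ = μ.prod ν)
    (E : Set (α × β)) (hE : MeasurableSet E) (hpos : 0 < ρ E)
    (f : α × β → ℝ≥0∞) (hf : Measurable f) :
    ∫⁻ p, f p ∂(ρ[|E]) =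
      ∫⁻ a, (∫⁻ b, f (a, b) ∂(ν[|{b : β | (a, b) ∈ E}])) ∂((ρ[|E]).map Prod.fst) := by
  subst hρ
  set ρ := μ.prod ν with hρ
  -- sections
  have hEa : ∀ a : α, MeasurableSet {b : β | (a, b) ∈ E} := fun a =>
    measurable_prodMk_left hE
  set h : α → ℝ≥0∞ := fun a => ν {b : β | (a, b) ∈ E} with hh_def
  have hh : Measurable h := measurable_measure_prodMk_left hE
  -- the section lintegral
  set k : α → ℝ≥0∞ := fun a => ∫⁻ b in {b : β | (a, b) ∈ E}, f (a, b) ∂ν with hk_def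
  have hk_eq : ∀ a, k a = ∫⁻ b, E.indicator f (a, b) ∂ν := by
    intro a
    rw [hk_def]
    simp only
    rw [← lintegral_indicator (hEa a)]
    congr 1
  have hk : Measurable k := by
    have : Measurable fun a => ∫⁻ b, E.indicator f (a, b) ∂ν :=
      Measurable.lintegral_prod_right' (hf.indicator hE)
    simpa [funext hk_eq] using this
  -- the map measure is μ with density (ρ E)⁻¹ * h
  have hmap : (ρ[|E]).map Prod.fst = μ.withDensity (fun a => (ρ E)⁻¹ * h a) := by
    ext A hA
    rw [Measure.map_apply measurable_fst hA, cond_apply hE, withDensity_apply _ hA]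
    have hinter : ρ (E ∩ Prod.fst ⁻¹' A) =
        ∫⁻ a in A, h a ∂μ := by
      rw [hρ, Measure.prod_apply (hE.inter (measurable_fst hA))]
      rw [← lintegral_indicator hA]
      congr 1
      funext a
      by_cases haA : a ∈ A
      · simp only [Set.indicator_of_mem haA]
        congr 1
        ext b
        simp [haA]
      · simp only [Set.indicator_of_notMem haA]
        convert measure_empty (μ := ν)
        ext b
        simp [haA]
    rw [hinter, ← lintegral_const_mul _ hh]
  -- the inner conditional integral
  have hg_eq : ∀ a, (∫⁻ b, f (a, b) ∂(ν[|{b : β | (a, b) ∈ E}])) =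
      (h a)⁻¹ * k a := by
    intro a
    rw [ProbabilityTheory.cond, lintegral_smul_measure]
    rfl
  have hg : Measurable fun a => ∫⁻ b, f (a, b) ∂(ν[|{b : β | (a, b) ∈ E}]) := by
    simp only [hg_eq]
    exact hh.inv.mul hk
  -- null sections give zero
  have hk_zero : ∀ a, h a = 0 → k a = 0 := by
    intro a ha
    rw [hk_def]
    simp only
    rw [Measure.restrict_eq_zero.mpr ha]
    simp
  -- compute the RHS
  rw [hmap, lintegral_withDensity_eq_lintegral_mul μ (hh.const_mul _) hg]
  have : ∀ a, ((fun a => (ρ E)⁻¹ * h a) * fun a =>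
      ∫⁻ b, f (a, b) ∂(ν[|{b : β | (a, b) ∈ E}])) a = (ρ E)⁻¹ * k a := by
    intro a
    simp only [Pi.mul_apply, hg_eq]
    by_cases ha : h a = 0
    · simp [ha, hk_zero a ha]
    · rw [mul_assoc, ← mul_assoc (h a), ENNReal.mul_inv_cancel ha (measure_ne_top ν _),
        one_mul]
  simp only [this]
  rw [lintegral_const_mul _ hk]
  -- compute the LHS
  rw [ProbabilityTheory.cond, lintegral_smul_measure]
  congr 1
  rw [← lintegral_indicator hE, hρ, MeasureTheory.lintegral_prod _ (hf.indicator hE).aemeasurable]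
  exact lintegral_congr fun a => (hk_eq a).symm
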